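/- Let J : T → U⊗U be a function such that each J(λ) is invertible and of zero weight, and embed J into H⊗H as Ĵ = Σ_{λ∈T} E_{λλ}J⁽¹⁾(λ)⊗E_{λλ}J⁽²⁾(λ) (and similarly Ĵ⁻¹ for λ ↦ J(λ)⁻¹). Then the following identities hold in H⊗H⊗H: (i) (Δ_H⊗id)(Θ)·(Ĵ⊗1) = (Ĵ⁺⊗1)·(Δ_H⊗id)(Θ), where Ĵ⁺ denotes the embedding of λ ↦ J(λ+μ) weighted by P_μ in the third factor, i.e. Ĵ⁺⊗1 = Σ_{λ,μ} E_{λλ}J⁽¹⁾(λ+μ)⊗E_{λλ}J⁽²⁾(λ+μ)⊗(1⊗P_μ); (ii) (id⊗Δ_H)(Θ)·(1⊗Ĵ) = (1⊗Ĵ)·(id⊗Δ_H)(Θ); (iii) (Ĵ⁻¹⊗1)·(Δ_H⊗id)(Θ̄) = (Δ_H⊗id)(Θ̄)·(Ĵ⁻¹⁺⊗1), where Ĵ⁻¹⁺⊗1 = Σ_{λ,μ} E_{λλ}(J(λ+μ)⁻¹)⁽¹⁾⊗E_{λλ}(J(λ+μ)⁻¹)⁽²⁾⊗(1⊗P_μ);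 (iv) (1⊗Ĵ⁻¹)·(id⊗Δ_H)(Θ̄) = (id⊗Δ_H)(Θ̄)·(1⊗Ĵ⁻¹). -/

import Mathlib

open TensorProduct

noncomputable section

namespace WHA

variable (k B : Type*) [Field k] [Ring B] [Algebra k B]

/-- `x ↦ x ⊗ 1`, the embedding of `B ⊗ B` into legs 1,2 of `B ⊗ B ⊗ B`. -/
def leg12 : B ⊗[k] B →ₗ[k] B ⊗[k] (B ⊗[k] B) :=
  (TensorProduct.assoc k B B B).toLinearMap ∘ₗ (TensorProduct.mk k (B ⊗[k] B) B).flip 1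

/-- `x ↦ 1 ⊗ x`, the embedding of `B ⊗ B` into legs 2,3 of `B ⊗ B ⊗ B`. -/
def leg23 : B ⊗[k] B →ₗ[k] B ⊗[k] (B ⊗[k] B) :=
  TensorProduct.mk k B (B ⊗[k] B) 1

/-- `a ⊗ b ↦ a ⊗ 1 ⊗ b`, the embedding of `B ⊗ B` into legs 1,3 of `B ⊗ B ⊗ B`. -/
def leg13 : B ⊗[k] B →ₗ[k] B ⊗[k] (B ⊗[k] B) :=
  TensorProduct.map LinearMap.id (TensorProduct.mk k B B 1)

/-- `Δ ⊗ id`, landing in the right-associated triple tensor product. -/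
def ext12 (Δ : B →ₗ[k] B ⊗[k] B) : B ⊗[k] B →ₗ[k] B ⊗[k] (B ⊗[k] B) :=
  (TensorProduct.assoc k B B B).toLinearMap ∘ₗ TensorProduct.map Δ LinearMap.id

/-- `id ⊗ Δ`. -/
def ext23 (Δ : B →ₗ[k] B ⊗[k] B) : B ⊗[k] B →ₗ[k] B ⊗[k] (B ⊗[k] B) :=
  TensorProduct.map LinearMap.id Δ

/-- `(ε ⊗ id)` composed with the canonical isomorphism `k ⊗ B ≅ B`. -/
def epsL (ε : B →ₗ[k] k) : B ⊗[k] B →ₗ[k] B :=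
  (TensorProduct.lid k B).toLinearMap ∘ₗ TensorProduct.map ε LinearMap.id

/-- `(id ⊗ ε)` composed with the canonical isomorphism `B ⊗ k ≅ B`. -/
def epsR (ε : B →ₗ[k] k) : B ⊗[k] B →ₗ[k] B :=
  (TensorProduct.rid k B).toLinearMap ∘ₗ TensorProduct.map LinearMap.id ε

/-- Pairing of two linear functionals against an element of `B ⊗ B`. -/
def pairF (φ ψ : B →ₗ[k] k) : B ⊗[k] B →ₗ[k] k :=
  (TensorProduct.lid k k).toLinearMap ∘ₗ TensorProduct.map φ ψ

/-- The multiplication map `B ⊗ B → B`. -/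
def mul2 : B ⊗[k] B →ₗ[k] B := LinearMap.mul' k B

end WHA

namespace DQG

variable (k : Type*) [Field k]
variable (T : Type*) [AddCommGroup T] [Fintype T] [DecidableEq T]
variable (U : Type*) [Ring U] [HopfAlgebra k U]

/-- The matrix units `E_{λμ}`. -/
def E (l m : T) : Matrix T T k := Matrix.single l m 1

/-- The `(λ,μ)` matrix entry, as a linear functional. -/
def entry (l m : T) : Matrix T T k →ₗ[k] k where
  toFun A := A l m
  map_add' _ _ := rfl
  map_smul' _ _ := rfl

/-- The comultiplication of `End_k(A)`: `Δ(E_{λμ}) = E_{λμ} ⊗ E_{λμ}`. -/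
def ΔM : Matrix T T k →ₗ[k] Matrix T T k ⊗[k] Matrix T T k :=
  ∑ l : T, ∑ m : T, (entry k T l m).smulRight (E k T l m ⊗ₜ[k] E k T l m)

/-- The counit of `End_k(A)`: `ε(E_{λμ}) = 1`. -/
def εM : Matrix T T k →ₗ[k] k := ∑ l : T, ∑ m : T, entry k T l m

/-- The antipode of `End_k(A)`: `S(E_{λμ}) = E_{μλ}`. -/
def SM : Matrix T T k →ₗ[k] Matrix T T k :=
  ∑ l : T, ∑ m : T, (entry k T l m).smulRight (E k T m l)

/-- The comultiplication of the tensor product weak Hopf algebra `H = End_k(A) ⊗ U`. -/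
def ΔH : (Matrix T T k ⊗[k] U) →ₗ[k] (Matrix T T k ⊗[k] U) ⊗[k] (Matrix T T k ⊗[k] U) :=
  (TensorProduct.tensorTensorTensorComm k (Matrix T T k) (Matrix T T k) U U).toLinearMap ∘ₗ
    TensorProduct.map (ΔM k T) Coalgebra.comul

/-- The counit of `H = End_k(A) ⊗ U`. -/
def εH : (Matrix T T k ⊗[k] U) →ₗ[k] k :=
  (TensorProduct.lid k k).toLinearMap ∘ₗ TensorProduct.map (εM k T) Coalgebra.counit

/-- The antipode of `H = End_k(A) ⊗ U`. -/
def SH : (Matrix T T k ⊗[k] U) →ₗ[k] (Matrix T T k ⊗[k] U) :=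
  TensorProduct.map (SM k T) (HopfAlgebra.antipode (R := k))

set_option maxHeartbeats 1000000 in
/-- The canonical ring structure on the triple tensor power of `H = End_k(A) ⊗ U`
(made explicit to help instance resolution). -/
instance triRing : Ring ((Matrix T T k ⊗[k] U) ⊗[k] ((Matrix T T k ⊗[k] U) ⊗[k] (Matrix T T k ⊗[k] U))) := by
  exact Algebra.TensorProduct.instRing (R := k) (A := Matrix T T k ⊗[k] U)
    (B := (Matrix T T k ⊗[k] U) ⊗[k] (Matrix T T k ⊗[k] U))

variable (P : T → U)

/-- The hypotheses on the system of idempotents `{P_μ}` spanning the abelian Hopf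
subalgebra `A ⊆ U`. -/
structure IsPSystem : Prop where
  orth : ∀ m n : T, P m * P n = if m = n then P m else 0
  sum_one : ∑ m : T, P m = 1
  comul_P : ∀ m : T, Coalgebra.comul (R := k) (P m) = ∑ n : T, P n ⊗ₜ[k] P (m - n)
  counit_P : ∀ m : T, Coalgebra.counit (R := k) (P m) = if m = 0 then (1 : k) else 0
  antipode_P : ∀ m : T, HopfAlgebra.antipode (R := k) (P m) = P (-m)

/-- The element `Θ = Σ_{λμ} E_{λ,λ+μ} ⊗ E_{λλ}P_μ` of `H ⊗ H`. -/
def Θ : (Matrix T T k ⊗[k] U) ⊗[k] (Matrix T T k ⊗[k] U) :=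
  ∑ l : T, ∑ m : T, ((E k T l (l + m)) ⊗ₜ[k] (1 : U)) ⊗ₜ[k] ((E k T l l) ⊗ₜ[k] P m)

/-- The element `Θ̄ = Σ_{λμ} E_{λ+μ,λ} ⊗ E_{λλ}P_μ` of `H ⊗ H`. -/
def Θbar : (Matrix T T k ⊗[k] U) ⊗[k] (Matrix T T k ⊗[k] U) :=
  ∑ l : T, ∑ m : T, ((E k T (l + m) l) ⊗ₜ[k] (1 : U)) ⊗ₜ[k] ((E k T l l) ⊗ₜ[k] P m)

/-- `u ⊗ v ↦ (E_{λλ} ⊗ u) ⊗ (E_{λλ} ⊗ v)`. -/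
def embAt (l : T) : U ⊗[k] U →ₗ[k] (Matrix T T k ⊗[k] U) ⊗[k] (Matrix T T k ⊗[k] U) :=
  TensorProduct.map (TensorProduct.mk k (Matrix T T k) U (E k T l l))
    (TensorProduct.mk k (Matrix T T k) U (E k T l l))

/-- The embedding `J ↦ Ĵ = Σ_λ E_{λλ}J⁽¹⁾(λ) ⊗ E_{λλ}J⁽²⁾(λ)` of a
`U ⊗ U`-valued function on `T` into `H ⊗ H`. -/
def emb (J : T → U ⊗[k] U) : (Matrix T T k ⊗[k] U) ⊗[k] (Matrix T T k ⊗[k] U) := ∑ l : T, embAt k T U l (J l)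

/-- `x = a ⊗ b ↦ a ⊗ b ⊗ P_μ ∈ U ⊗ U ⊗ U`. -/
def withP (m : T) : U ⊗[k] U →ₗ[k] U ⊗[k] (U ⊗[k] U) :=
  TensorProduct.map LinearMap.id ((TensorProduct.mk k U U).flip (P m))

/-- `x ↦ P_μ ⊗ x ∈ U ⊗ U ⊗ U`. -/
def withPleft (m : T) : U ⊗[k] U →ₗ[k] U ⊗[k] (U ⊗[k] U) :=
  TensorProduct.mk k U (U ⊗[k] U) (P m)

/-- `J` is a dynamical twist for `U`, with pointwise inverse `Jbar`. -/
structure IsDynTwist (J Jbar : T → U ⊗[k] U) : Prop where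
  inv_right : ∀ l : T, J l * Jbar l = 1
  inv_left : ∀ l : T, Jbar l * J l = 1
  zero_weight : ∀ l m : T,
    J l * Coalgebra.comul (R := k) (P m) = Coalgebra.comul (R := k) (P m) * J l
  counit_left : ∀ l : T, WHA.epsL k U Coalgebra.counit (J l) = 1
  counit_right : ∀ l : T, WHA.epsR k U Coalgebra.counit (J l) = 1
  dyn : ∀ l : T,
    WHA.ext12 k U Coalgebra.comul (J l) * (∑ m : T, withP k T U P m (J (l + m)))
      = WHA.ext23 k U Coalgebra.comul (J l) * WHA.leg23 k U (J l)

end DQG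

namespace DQG

variable (k : Type*) [Field k]
variable (T : Type*) [AddCommGroup T] [Fintype T] [DecidableEq T]
variable (U : Type*) [Ring U] [HopfAlgebra k U]
variable (P : T → U)

/-- `u ⊗ v ↦ (E_{λλ} ⊗ u) ⊗ ((E_{λλ} ⊗ v) ⊗ (1 ⊗ P_μ))` in `H ⊗ H ⊗ H`. -/
def embShiftAt (l m : T) : U ⊗[k] U →ₗ[k] (Matrix T T k ⊗[k] U) ⊗[k] ((Matrix T T k ⊗[k] U) ⊗[k] (Matrix T T k ⊗[k] U)) :=
  TensorProduct.map (TensorProduct.mk k (Matrix T T k) U (E k T l l))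
    (((TensorProduct.mk k (Matrix T T k ⊗[k] U) (Matrix T T k ⊗[k] U)).flip ((1 : Matrix T T k) ⊗ₜ[k] P m)) ∘ₗ
      (TensorProduct.mk k (Matrix T T k) U (E k T l l)))

end DQG

namespace ThetaAux

open TensorProduct DQG

variable (k : Type*) [Field k]
variable (T : Type*) [AddCommGroup T] [Fintype T] [DecidableEq T]
variable (U : Type*) [Ring U] [HopfAlgebra k U]

set_option linter.unusedSectionVars false
set_option synthInstance.maxHeartbeats 400000
set_option maxHeartbeats 1000000

/-- `u ⊗ v ↦ (A ⊗ u) ⊗ ((B ⊗ v) ⊗ (C ⊗ w))`. -/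
def tp (A B C : Matrix T T k) (w : U) :
    U ⊗[k] U →ₗ[k] (Matrix T T k ⊗[k] U) ⊗[k] ((Matrix T T k ⊗[k] U) ⊗[k] (Matrix T T k ⊗[k] U)) :=
  TensorProduct.map (TensorProduct.mk k (Matrix T T k) U A)
    (((TensorProduct.mk k (Matrix T T k ⊗[k] U) (Matrix T T k ⊗[k] U)).flip (C ⊗ₜ[k] w)) ∘ₗ
      (TensorProduct.mk k (Matrix T T k) U B))

/-- `u ⊗ v ↦ (A ⊗ w) ⊗ ((B ⊗ u) ⊗ (C ⊗ v))`. -/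
def tq (A : Matrix T T k) (w : U) (B C : Matrix T T k) :
    U ⊗[k] U →ₗ[k] (Matrix T T k ⊗[k] U) ⊗[k] ((Matrix T T k ⊗[k] U) ⊗[k] (Matrix T T k ⊗[k] U)) :=
  (TensorProduct.mk k (Matrix T T k ⊗[k] U)
      ((Matrix T T k ⊗[k] U) ⊗[k] (Matrix T T k ⊗[k] U)) (A ⊗ₜ[k] w)) ∘ₗ
    TensorProduct.map (TensorProduct.mk k (Matrix T T k) U B) (TensorProduct.mk k (Matrix T T k) U C)

@[simp] lemma tp_tmul (A B C : Matrix T T k) (w u v : U) :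
    tp k T U A B C w (u ⊗ₜ[k] v) = (A ⊗ₜ[k] u) ⊗ₜ[k] ((B ⊗ₜ[k] v) ⊗ₜ[k] (C ⊗ₜ[k] w)) := rfl

@[simp] lemma tq_tmul (A B C : Matrix T T k) (w u v : U) :
    tq k T U A w B C (u ⊗ₜ[k] v) = (A ⊗ₜ[k] w) ⊗ₜ[k] ((B ⊗ₜ[k] u) ⊗ₜ[k] (C ⊗ₜ[k] v)) := rfl

lemma tmul3_mul (a a' : Matrix T T k ⊗[k] U) (b b' : (Matrix T T k ⊗[k] U) ⊗[k] (Matrix T T k ⊗[k] U)) :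
    (a ⊗ₜ[k] b) * (a' ⊗ₜ[k] b') = (a * a') ⊗ₜ[k] (b * b') :=
  Algebra.TensorProduct.tmul_mul_tmul a a' b b'

lemma tp_mul (A A' B B' C C' : Matrix T T k) (w w' : U) (x y : U ⊗[k] U) :
    tp k T U A B C w x * tp k T U A' B' C' w' y
      = tp k T U (A * A') (B * B') (C * C') (w * w') (x * y) := by
  induction x using TensorProduct.induction_on with
  | zero => simp [zero_mul]
  | add x₁ x₂ h₁ h₂ => rw [map_add, add_mul, h₁, h₂, add_mul, map_add]
  | tmul u v =>
    induction y using TensorProduct.induction_on with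
    | zero => simp [mul_zero]
    | add y₁ y₂ h₁ h₂ => rw [map_add, mul_add, h₁, h₂, mul_add, map_add]
    | tmul u' v' =>
      simp [tmul3_mul, Algebra.TensorProduct.tmul_mul_tmul]

lemma tq_mul (A A' B B' C C' : Matrix T T k) (w w' : U) (x y : U ⊗[k] U) :
    tq k T U A w B C x * tq k T U A' w' B' C' y
      = tq k T U (A * A') (w * w') (B * B') (C * C') (x * y) := by
  induction x using TensorProduct.induction_on with
  | zero => simp [zero_mul]
  | add x₁ x₂ h₁ h₂ => rw [map_add, add_mul, h₁, h₂, add_mul, map_add]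
  | tmul u v =>
    induction y using TensorProduct.induction_on with
    | zero => simp [mul_zero]
    | add y₁ y₂ h₁ h₂ => rw [map_add, mul_add, h₁, h₂, mul_add, map_add]
    | tmul u' v' =>
      simp [tmul3_mul, Algebra.TensorProduct.tmul_mul_tmul]

lemma tp_zeroA (B C : Matrix T T k) (w : U) (x : U ⊗[k] U) :
    tp k T U 0 B C w x = 0 := by
  induction x using TensorProduct.induction_on with
  | zero => simp
  | add x₁ x₂ h₁ h₂ => rw [map_add, h₁, h₂, add_zero]
  | tmul u v => simp

lemma tp_zerow (A B C : Matrix T T k) (x : U ⊗[k] U) :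
    tp k T U A B C 0 x = 0 := by
  induction x using TensorProduct.induction_on with
  | zero => simp
  | add x₁ x₂ h₁ h₂ => rw [map_add, h₁, h₂, add_zero]
  | tmul u v => simp

lemma tq_zeroB (A C : Matrix T T k) (w : U) (x : U ⊗[k] U) :
    tq k T U A w 0 C x = 0 := by
  induction x using TensorProduct.induction_on with
  | zero => simp
  | add x₁ x₂ h₁ h₂ => rw [map_add, h₁, h₂, add_zero]
  | tmul u v => simp

lemma tp_if2 (c : Prop) [Decidable c] (A B C : Matrix T T k) (w : U) (x : U ⊗[k] U) :
    tp k T U (if c then A else 0) (if c then B else 0) C w x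
      = if c then tp k T U A B C w x else 0 := by
  split_ifs with h
  · rfl
  · exact tp_zeroA k T U _ _ _ _

lemma tp_ifs (c d : Prop) [Decidable c] [Decidable d] (A B C : Matrix T T k) (w : U) (x : U ⊗[k] U) :
    tp k T U (if c then A else 0) (if c then B else 0) C (if d then w else 0) x
      = if d then (if c then tp k T U A B C w x else 0) else 0 := by
  split_ifs with h h'
  · rfl
  · exact tp_zerow k T U _ _ _ _
  · exact tp_zeroA k T U _ _ _ _
  · exact tp_zeroA k T U _ _ _ _

lemma tq_if2 (c : Prop) [Decidable c] (A B C : Matrix T T k) (w : U) (x : U ⊗[k] U) :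
    tq k T U A w (if c then B else 0) (if c then C else 0) x
      = if c then tq k T U A w B C x else 0 := by
  split_ifs with h
  · rfl
  · exact tq_zeroB k T U _ _ _ _

lemma E_mul (a b c d : T) :
    DQG.E k T a b * DQG.E k T c d = if b = c then DQG.E k T a d else 0 := by
  by_cases h : b = c
  · subst h; simp [DQG.E, Matrix.single_mul_single_same]
  · simp [h, DQG.E, Matrix.single_mul_single_of_ne]

lemma ΔM_E (l m : T) :
    DQG.ΔM k T (DQG.E k T l m) = DQG.E k T l m ⊗ₜ[k] DQG.E k T l m := by
  simp only [DQG.ΔM, LinearMap.sum_apply, LinearMap.smulRight_apply]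
  have h : ∀ a b : T, DQG.entry k T a b (DQG.E k T l m) = if a = l ∧ b = m then 1 else 0 := by
    intro a b
    show Matrix.single l m (1 : k) a b = _
    simp only [Matrix.single_apply, @eq_comm _ l a, @eq_comm _ m b]
  simp [h, ite_smul, ite_and, Finset.sum_ite_eq]

lemma ΔH_E (l m : T) (u : U) :
    DQG.ΔH k T U (DQG.E k T l m ⊗ₜ[k] u)
      = TensorProduct.map (TensorProduct.mk k (Matrix T T k) U (DQG.E k T l m))
          (TensorProduct.mk k (Matrix T T k) U (DQG.E k T l m))
          (Coalgebra.comul (R := k) u) := by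
  simp only [DQG.ΔH, LinearMap.comp_apply, TensorProduct.map_tmul, ΔM_E]
  generalize Coalgebra.comul (R := k) u = x
  induction x using TensorProduct.induction_on with
  | zero => simp
  | add x₁ x₂ h₁ h₂ => rw [tmul_add, map_add, h₁, h₂, map_add]
  | tmul a b => simp [TensorProduct.tensorTensorTensorComm_tmul]

variable (P : T → U)

lemma ext12_Θ_eq :
    WHA.ext12 k (Matrix T T k ⊗[k] U) (DQG.ΔH k T U) (DQG.Θ k T U P)
      = ∑ l : T, ∑ m : T,
          tp k T U (DQG.E k T l (l + m)) (DQG.E k T l (l + m)) (DQG.E k T l l) (P m)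
            (1 : U ⊗[k] U) := by
  rw [DQG.Θ, map_sum]
  refine Finset.sum_congr rfl fun l _ => ?_
  rw [map_sum]
  refine Finset.sum_congr rfl fun m _ => ?_
  rw [WHA.ext12, LinearMap.comp_apply, TensorProduct.map_tmul, LinearMap.id_coe, id_eq,
    ΔH_E, Bialgebra.comul_one, Algebra.TensorProduct.one_def, TensorProduct.map_tmul,
    TensorProduct.mk_apply, LinearEquiv.coe_coe, TensorProduct.assoc_tmul]
  rfl

lemma ext12_Θbar_eq :
    WHA.ext12 k (Matrix T T k ⊗[k] U) (DQG.ΔH k T U) (DQG.Θbar k T U P)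
      = ∑ l : T, ∑ m : T,
          tp k T U (DQG.E k T (l + m) l) (DQG.E k T (l + m) l) (DQG.E k T l l) (P m)
            (1 : U ⊗[k] U) := by
  rw [DQG.Θbar, map_sum]
  refine Finset.sum_congr rfl fun l _ => ?_
  rw [map_sum]
  refine Finset.sum_congr rfl fun m _ => ?_
  rw [WHA.ext12, LinearMap.comp_apply, TensorProduct.map_tmul, LinearMap.id_coe, id_eq,
    ΔH_E, Bialgebra.comul_one, Algebra.TensorProduct.one_def, TensorProduct.map_tmul,
    TensorProduct.mk_apply, LinearEquiv.coe_coe, TensorProduct.assoc_tmul]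
  rfl

lemma ext23_Θ_eq :
    WHA.ext23 k (Matrix T T k ⊗[k] U) (DQG.ΔH k T U) (DQG.Θ k T U P)
      = ∑ l : T, ∑ m : T,
          tq k T U (DQG.E k T l (l + m)) (1 : U) (DQG.E k T l l) (DQG.E k T l l)
            (Coalgebra.comul (R := k) (P m)) := by
  rw [DQG.Θ, map_sum]
  refine Finset.sum_congr rfl fun l _ => ?_
  rw [map_sum]
  refine Finset.sum_congr rfl fun m _ => ?_
  rw [WHA.ext23, TensorProduct.map_tmul, LinearMap.id_coe, id_eq, ΔH_E]
  rfl

lemma ext23_Θbar_eq :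
    WHA.ext23 k (Matrix T T k ⊗[k] U) (DQG.ΔH k T U) (DQG.Θbar k T U P)
      = ∑ l : T, ∑ m : T,
          tq k T U (DQG.E k T (l + m) l) (1 : U) (DQG.E k T l l) (DQG.E k T l l)
            (Coalgebra.comul (R := k) (P m)) := by
  rw [DQG.Θbar, map_sum]
  refine Finset.sum_congr rfl fun l _ => ?_
  rw [map_sum]
  refine Finset.sum_congr rfl fun m _ => ?_
  rw [WHA.ext23, TensorProduct.map_tmul, LinearMap.id_coe, id_eq, ΔH_E]
  rfl

lemma leg12_embAt_eq (l : T) (x : U ⊗[k] U) :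
    WHA.leg12 k (Matrix T T k ⊗[k] U) (DQG.embAt k T U l x)
      = tp k T U (DQG.E k T l l) (DQG.E k T l l) (1 : Matrix T T k) (1 : U) x := by
  induction x using TensorProduct.induction_on with
  | zero => simp
  | add x₁ x₂ h₁ h₂ => rw [map_add, map_add, h₁, h₂, map_add]
  | tmul u v =>
    rw [DQG.embAt, TensorProduct.map_tmul, WHA.leg12, LinearMap.comp_apply,
      LinearMap.flip_apply, TensorProduct.mk_apply, Algebra.TensorProduct.one_def,
      LinearEquiv.coe_coe, TensorProduct.assoc_tmul]
    rfl

lemma leg23_embAt_eq (l : T) (x : U ⊗[k] U) :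
    WHA.leg23 k (Matrix T T k ⊗[k] U) (DQG.embAt k T U l x)
      = tq k T U (1 : Matrix T T k) (1 : U) (DQG.E k T l l) (DQG.E k T l l) x := by
  rw [WHA.leg23, TensorProduct.mk_apply, Algebra.TensorProduct.one_def]
  rfl

lemma leg12_emb_eq (J : T → U ⊗[k] U) :
    WHA.leg12 k (Matrix T T k ⊗[k] U) (DQG.emb k T U J)
      = ∑ l : T, tp k T U (DQG.E k T l l) (DQG.E k T l l) (1 : Matrix T T k) (1 : U) (J l) := by
  rw [DQG.emb, map_sum]
  exact Finset.sum_congr rfl fun l _ => leg12_embAt_eq k T U l (J l)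

lemma leg23_emb_eq (J : T → U ⊗[k] U) :
    WHA.leg23 k (Matrix T T k ⊗[k] U) (DQG.emb k T U J)
      = ∑ l : T, tq k T U (1 : Matrix T T k) (1 : U) (DQG.E k T l l) (DQG.E k T l l) (J l) := by
  rw [DQG.emb, map_sum]
  exact Finset.sum_congr rfl fun l _ => leg23_embAt_eq k T U l (J l)

lemma embShiftAt_eq (l m : T) (x : U ⊗[k] U) :
    DQG.embShiftAt k T U P l m x
      = tp k T U (DQG.E k T l l) (DQG.E k T l l) (1 : Matrix T T k) (P m) x := rfl

/-- Collapse an outer sum against a condition `ρ = h l m`. -/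
lemma sum_outer {β : Type*} [AddCommMonoid β] (h : T → T → T) (g : T → T → T → β) :
    (∑ ρ : T, ∑ l : T, ∑ m : T, if ρ = h l m then g ρ l m else 0)
      = ∑ l : T, ∑ m : T, g (h l m) l m := by
  rw [Finset.sum_comm]
  refine Finset.sum_congr rfl fun l _ => ?_
  rw [Finset.sum_comm]
  refine Finset.sum_congr rfl fun m _ => ?_
  simp

end ThetaAux
namespace ThetaAux
variable (k : Type*) [Field k]
variable (T : Type*) [AddCommGroup T] [Fintype T] [DecidableEq T]
variable (U : Type*) [Ring U] [HopfAlgebra k U]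
variable (P : T → U)
set_option linter.unusedSectionVars false
set_option synthInstance.maxHeartbeats 400000
set_option maxHeartbeats 1000000

lemma sum3_rot {β : Type*} [AddCommMonoid β] (f : T → T → T → β) :
    (∑ a : T, ∑ b : T, ∑ c : T, f a b c) = ∑ b : T, ∑ c : T, ∑ a : T, f a b c := by
  calc (∑ a : T, ∑ b : T, ∑ c : T, f a b c) = ∑ b : T, ∑ a : T, ∑ c : T, f a b c :=
        Finset.sum_comm
    _ = ∑ b : T, ∑ c : T, ∑ a : T, f a b c :=
        Finset.sum_congr rfl fun b _ => Finset.sum_comm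

lemma sum4_swap {β : Type*} [AddCommMonoid β] (f : T → T → T → T → β) :
    (∑ a : T, ∑ b : T, ∑ c : T, ∑ d : T, f a b c d)
      = ∑ c : T, ∑ d : T, ∑ a : T, ∑ b : T, f a b c d := by
  calc (∑ a : T, ∑ b : T, ∑ c : T, ∑ d : T, f a b c d)
      = ∑ a : T, ∑ c : T, ∑ d : T, ∑ b : T, f a b c d :=
        Finset.sum_congr rfl fun a _ => sum3_rot T fun b c d => f a b c d
    _ = ∑ c : T, ∑ d : T, ∑ a : T, ∑ b : T, f a b c d :=
        sum3_rot T fun a c d => ∑ b : T, f a b c d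

lemma side1L (J : T → U ⊗[k] U) :
    WHA.ext12 k (Matrix T T k ⊗[k] U) (DQG.ΔH k T U) (DQG.Θ k T U P)
        * WHA.leg12 k (Matrix T T k ⊗[k] U) (DQG.emb k T U J)
      = ∑ l : T, ∑ m : T,
          tp k T U (DQG.E k T l (l + m)) (DQG.E k T l (l + m)) (DQG.E k T l l) (P m)
            (J (l + m)) := by
  rw [ext12_Θ_eq, leg12_emb_eq]
  simp only [Finset.sum_mul, Finset.mul_sum, tp_mul, E_mul, one_mul, mul_one, tp_if2]
  rw [sum3_rot]
  simp [Finset.sum_ite_eq]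

lemma side1R (hP : DQG.IsPSystem k T U P) (J : T → U ⊗[k] U) :
    (∑ l : T, ∑ m : T, DQG.embShiftAt k T U P l m (J (l + m)))
        * WHA.ext12 k (Matrix T T k ⊗[k] U) (DQG.ΔH k T U) (DQG.Θ k T U P)
      = ∑ l : T, ∑ m : T,
          tp k T U (DQG.E k T l (l + m)) (DQG.E k T l (l + m)) (DQG.E k T l l) (P m)
            (J (l + m)) := by
  rw [ext12_Θ_eq]
  simp only [embShiftAt_eq]
  simp only [Finset.sum_mul, Finset.mul_sum, tp_mul, E_mul, hP.orth, one_mul, mul_one, tp_ifs]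
  simp [Finset.sum_ite_eq']

lemma side2L (J : T → U ⊗[k] U) :
    WHA.ext23 k (Matrix T T k ⊗[k] U) (DQG.ΔH k T U) (DQG.Θ k T U P)
        * WHA.leg23 k (Matrix T T k ⊗[k] U) (DQG.emb k T U J)
      = ∑ l : T, ∑ m : T,
          tq k T U (DQG.E k T l (l + m)) (1 : U) (DQG.E k T l l) (DQG.E k T l l)
            (Coalgebra.comul (R := k) (P m) * J l) := by
  rw [ext23_Θ_eq, leg23_emb_eq]
  simp only [Finset.sum_mul, Finset.mul_sum, tq_mul, E_mul, one_mul, mul_one, tq_if2]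
  rw [sum3_rot]
  simp [Finset.sum_ite_eq]

lemma side2R (J : T → U ⊗[k] U) :
    WHA.leg23 k (Matrix T T k ⊗[k] U) (DQG.emb k T U J)
        * WHA.ext23 k (Matrix T T k ⊗[k] U) (DQG.ΔH k T U) (DQG.Θ k T U P)
      = ∑ l : T, ∑ m : T,
          tq k T U (DQG.E k T l (l + m)) (1 : U) (DQG.E k T l l) (DQG.E k T l l)
            (J l * Coalgebra.comul (R := k) (P m)) := by
  rw [ext23_Θ_eq, leg23_emb_eq]
  simp only [Finset.sum_mul, Finset.mul_sum, tq_mul, E_mul, one_mul, mul_one, tq_if2]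
  simp [Finset.sum_ite_eq']

lemma side3L (J : T → U ⊗[k] U) :
    WHA.leg12 k (Matrix T T k ⊗[k] U) (DQG.emb k T U J)
        * WHA.ext12 k (Matrix T T k ⊗[k] U) (DQG.ΔH k T U) (DQG.Θbar k T U P)
      = ∑ l : T, ∑ m : T,
          tp k T U (DQG.E k T (l + m) l) (DQG.E k T (l + m) l) (DQG.E k T l l) (P m)
            (J (l + m)) := by
  rw [ext12_Θbar_eq, leg12_emb_eq]
  simp only [Finset.sum_mul, Finset.mul_sum, tp_mul, E_mul, one_mul, mul_one, tp_if2]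
  simp [Finset.sum_ite_eq']

lemma side3R (hP : DQG.IsPSystem k T U P) (J : T → U ⊗[k] U) :
    WHA.ext12 k (Matrix T T k ⊗[k] U) (DQG.ΔH k T U) (DQG.Θbar k T U P)
        * (∑ l : T, ∑ m : T, DQG.embShiftAt k T U P l m (J (l + m)))
      = ∑ l : T, ∑ m : T,
          tp k T U (DQG.E k T (l + m) l) (DQG.E k T (l + m) l) (DQG.E k T l l) (P m)
            (J (l + m)) := by
  rw [ext12_Θbar_eq]
  simp only [embShiftAt_eq]
  simp only [Finset.sum_mul, Finset.mul_sum, tp_mul, E_mul, hP.orth, one_mul, mul_one, tp_ifs]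
  rw [sum4_swap]
  simp [Finset.sum_ite_eq]

lemma side4L (J : T → U ⊗[k] U) :
    WHA.leg23 k (Matrix T T k ⊗[k] U) (DQG.emb k T U J)
        * WHA.ext23 k (Matrix T T k ⊗[k] U) (DQG.ΔH k T U) (DQG.Θbar k T U P)
      = ∑ l : T, ∑ m : T,
          tq k T U (DQG.E k T (l + m) l) (1 : U) (DQG.E k T l l) (DQG.E k T l l)
            (J l * Coalgebra.comul (R := k) (P m)) := by
  rw [ext23_Θbar_eq, leg23_emb_eq]
  simp only [Finset.sum_mul, Finset.mul_sum, tq_mul, E_mul, one_mul, mul_one, tq_if2]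
  simp [Finset.sum_ite_eq']

lemma side4R (J : T → U ⊗[k] U) :
    WHA.ext23 k (Matrix T T k ⊗[k] U) (DQG.ΔH k T U) (DQG.Θbar k T U P)
        * WHA.leg23 k (Matrix T T k ⊗[k] U) (DQG.emb k T U J)
      = ∑ l : T, ∑ m : T,
          tq k T U (DQG.E k T (l + m) l) (1 : U) (DQG.E k T l l) (DQG.E k T l l)
            (Coalgebra.comul (R := k) (P m) * J l) := by
  rw [ext23_Θbar_eq, leg23_emb_eq]
  simp only [Finset.sum_mul, Finset.mul_sum, tq_mul, E_mul, one_mul, mul_one, tq_if2]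
  rw [sum3_rot]
  simp [Finset.sum_ite_eq]

end ThetaAux
set_option maxHeartbeats 1000000 in
set_option synthInstance.maxHeartbeats 200000 in
/-- commutation identities between `Θ, Θ̄` and the embedding of an
invertible zero-weight function `J : T → U ⊗ U` into `H ⊗ H`. -/
theorem theta_J_identities
    (k : Type*) [Field k]
    (T : Type*) [AddCommGroup T] [Fintype T] [DecidableEq T]
    (U : Type*) [Ring U] [HopfAlgebra k U]
    (P : T → U) (hP : DQG.IsPSystem k T U P)
    (J Jbar : T → U ⊗[k] U)
    (hinv₁ : ∀ l : T, J l * Jbar l = 1) (hinv₂ : ∀ l : T, Jbar l * J l = 1)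
    (hw : ∀ l m : T,
      J l * Coalgebra.comul (R := k) (P m) = Coalgebra.comul (R := k) (P m) * J l)
    (Th Thb Jh Jbh : (Matrix T T k ⊗[k] U) ⊗[k] (Matrix T T k ⊗[k] U))
    (hTh : Th = DQG.Θ k T U P) (hThb : Thb = DQG.Θbar k T U P)
    (hJh : Jh = DQG.emb k T U J) (hJbh : Jbh = DQG.emb k T U Jbar)
    (JS JbS : (Matrix T T k ⊗[k] U) ⊗[k] ((Matrix T T k ⊗[k] U) ⊗[k] (Matrix T T k ⊗[k] U)))
    (hJS : JS = ∑ l : T, ∑ m : T, DQG.embShiftAt k T U P l m (J (l + m)))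
    (hJbS : JbS = ∑ l : T, ∑ m : T, DQG.embShiftAt k T U P l m (Jbar (l + m))) :
    WHA.ext12 k (Matrix T T k ⊗[k] U) (DQG.ΔH k T U) Th * WHA.leg12 k (Matrix T T k ⊗[k] U) Jh
      = JS * WHA.ext12 k (Matrix T T k ⊗[k] U) (DQG.ΔH k T U) Th ∧
    WHA.ext23 k (Matrix T T k ⊗[k] U) (DQG.ΔH k T U) Th * WHA.leg23 k (Matrix T T k ⊗[k] U) Jh
      = WHA.leg23 k (Matrix T T k ⊗[k] U) Jh * WHA.ext23 k (Matrix T T k ⊗[k] U) (DQG.ΔH k T U) Th ∧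
    WHA.leg12 k (Matrix T T k ⊗[k] U) Jbh * WHA.ext12 k (Matrix T T k ⊗[k] U) (DQG.ΔH k T U) Thb
      = WHA.ext12 k (Matrix T T k ⊗[k] U) (DQG.ΔH k T U) Thb * JbS ∧
    WHA.leg23 k (Matrix T T k ⊗[k] U) Jbh * WHA.ext23 k (Matrix T T k ⊗[k] U) (DQG.ΔH k T U) Thb
      = WHA.ext23 k (Matrix T T k ⊗[k] U) (DQG.ΔH k T U) Thb * WHA.leg23 k (Matrix T T k ⊗[k] U) Jbh := by
  subst hTh hThb hJh hJbh hJS hJbS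
  have hw' : ∀ l m : T,
      Jbar l * Coalgebra.comul (R := k) (P m) = Coalgebra.comul (R := k) (P m) * Jbar l := by
    intro l m
    set c := Coalgebra.comul (R := k) (P m) with hc
    have h1 : Jbar l * (J l * c * Jbar l) = c * Jbar l := by
      rw [← mul_assoc, ← mul_assoc, hinv₂, one_mul]
    rw [hw] at h1
    have h2 : Jbar l * (c * J l * Jbar l) = Jbar l * c := by
      rw [mul_assoc, hinv₁, mul_one]
    rw [h2] at h1
    exact h1
  refine ⟨?_, ?_, ?_, ?_⟩
  · rw [ThetaAux.side1L, ThetaAux.side1R k T U P hP]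
  · rw [ThetaAux.side2L, ThetaAux.side2R]
    simp only [hw]
  · rw [ThetaAux.side3L, ThetaAux.side3R k T U P hP]
  · rw [ThetaAux.side4L, ThetaAux.side4R]
    simp only [hw']
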